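/- Let P_n(x) be the D'Arcais polynomials. For all positive integers a, b with a + b ≥ 5, P_a(2) · P_b(2) > P_{a+b}(2). -/

import Mathlib

/-- Sum of divisors function. -/
def mysigma (n : ℕ) : ℕ := ∑ d ∈ n.divisors, d

/-- Partition function: number of partitions of `n`. -/
def partcount (n : ℕ) : ℕ := Fintype.card (Nat.Partition n)

/-- D'Arcais polynomials as real functions. -/
noncomputable def P : ℕ → ℝ → ℝ
  | 0 => fun _ => 1
  | n + 1 => fun x => x / (n + 1) * ∑ k ∈ Finset.range (n + 1), (mysigma (k + 1) : ℝ) * P (n - k) x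

/-- Number of k-colored partitions of n (each part in one of k colors),
counted via splitting into one ordinary partition per color. -/
def pcolored : ℕ → ℕ → ℕ
  | 0, n => if n = 0 then 1 else 0
  | k + 1, n => ∑ j ∈ Finset.range (n + 1), pcolored k j * partcount (n - j)

noncomputable def q (n : ℕ) : ℝ := P n 2

lemma qstep (m : ℕ) : q (m+1) = 2/((m:ℝ)+1) * ∑ k ∈ Finset.range (m+1), (mysigma (k + 1) : ℝ) * q (m - k) := by
  simp [q, P]

lemma qv0' : q 0 = 1 := by simp [q, P]

lemma mysigma_ge (k : ℕ) : k ≤ mysigma k := by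
  rcases Nat.eq_zero_or_pos k with h | h
  · simp [h]
  · exact Finset.single_le_sum (fun d _ => Nat.zero_le d)
      (Nat.mem_divisors_self k (by omega))

lemma mysigma_le (k : ℕ) : mysigma k ≤ k^2 := by
  have h1 : mysigma k ≤ (k.divisors).card * k :=
    Finset.sum_le_card_nsmul _ _ _ (fun d hd => Nat.divisor_le hd)
  have hsub : k.divisors ⊆ Finset.Ico 1 (k+1) := Finset.filter_subset _ _
  have h2 : (k.divisors).card ≤ k := by
    have := Finset.card_le_card hsub
    simpa using this
  calc mysigma k ≤ (k.divisors).card * k := h1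
    _ ≤ k * k := Nat.mul_le_mul_right k h2
    _ = k^2 := (sq k).symm

lemma mysigma_pos (k : ℕ) (h : 1 ≤ k) : 1 ≤ mysigma k := le_trans h (mysigma_ge k)

lemma q_nonneg : ∀ n, 0 ≤ q n := by
  intro n
  induction n using Nat.strong_induction_on with
  | _ n IH =>
    match n with
    | 0 => rw [qv0']; norm_num
    | m+1 =>
      rw [qstep]
      apply mul_nonneg (by positivity)
      apply Finset.sum_nonneg
      intro k hk
      exact mul_nonneg (Nat.cast_nonneg _) (IH _ (by omega))

lemma q_rec (n : ℕ) (h : 1 ≤ n) :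
    (n:ℝ) * q n = 2 * ∑ k ∈ Finset.range n, (mysigma (k + 1) : ℝ) * q (n - 1 - k) := by
  obtain ⟨m, rfl⟩ := Nat.exists_eq_add_of_le h
  rw [show 1 + m = m + 1 from by omega, qstep]
  have h0 : ((m:ℝ)+1) ≠ 0 := by positivity
  have hsum : ∀ k ∈ Finset.range (m+1), (mysigma (k + 1) : ℝ) * q (m + 1 - 1 - k)
      = (mysigma (k + 1) : ℝ) * q (m - k) := by
    intro k hk; congr 2
  rw [Finset.sum_congr rfl hsum]
  push_cast
  field_simp

-- partial sums
lemma q_partial (v : ℕ) (h : 1 ≤ v) :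
    2 * ∑ j ∈ Finset.range v, q j ≤ (v:ℝ) * q v := by
  rw [q_rec v h]
  have : ∑ j ∈ Finset.range v, q j = ∑ k ∈ Finset.range v, q (v - 1 - k) :=
    (Finset.sum_range_reflect _ _).symm
  rw [this]
  have hle : ∀ k ∈ Finset.range v, q (v-1-k) ≤ (mysigma (k + 1) : ℝ) * q (v - 1 - k) := by
    intro k hk
    nth_rewrite 1 [← one_mul (q (v-1-k))]
    apply mul_le_mul_of_nonneg_right _ (q_nonneg _)
    exact_mod_cast mysigma_pos (k+1) (by omega)
  have := Finset.sum_le_sum hle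
  linarith

lemma q_ge_two (n : ℕ) (h : 1 ≤ n) : 2 ≤ q n := by
  have hrec := q_rec n h
  have hterm : (mysigma ((n-1) + 1) : ℝ) * q (n - 1 - (n-1)) ≤
      ∑ k ∈ Finset.range n, (mysigma (k + 1) : ℝ) * q (n - 1 - k) := by
    apply Finset.single_le_sum (f := fun k => (mysigma (k + 1) : ℝ) * q (n - 1 - k))
      (fun k _ => mul_nonneg (Nat.cast_nonneg _) (q_nonneg _))
    simp; omega
  rw [show n - 1 - (n-1) = 0 from by omega, qv0', mul_one] at hterm
  have hsig : (n:ℝ) ≤ (mysigma ((n-1)+1) : ℝ) := by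
    rw [show n - 1 + 1 = n from by omega]
    exact_mod_cast mysigma_ge n
  have hn : (0:ℝ) < n := by exact_mod_cast h
  nlinarith [hrec]

@[simp] lemma sigv1 : mysigma 1 = 1 := by decide
@[simp] lemma sigv2 : mysigma 2 = 3 := by decide
@[simp] lemma sigv3 : mysigma 3 = 4 := by decide
@[simp] lemma sigv4 : mysigma 4 = 7 := by decide
@[simp] lemma sigv5 : mysigma 5 = 6 := by decide
@[simp] lemma sigv6 : mysigma 6 = 12 := by decide
@[simp] lemma sigv7 : mysigma 7 = 8 := by decide
@[simp] lemma sigv8 : mysigma 8 = 15 := by decide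
@[simp] lemma sigv9 : mysigma 9 = 13 := by decide
@[simp] lemma sigv10 : mysigma 10 = 18 := by decide
@[simp] lemma sigv11 : mysigma 11 = 12 := by decide
@[simp] lemma sigv12 : mysigma 12 = 28 := by decide
@[simp] lemma sigv13 : mysigma 13 = 14 := by decide
@[simp] lemma sigv14 : mysigma 14 = 24 := by decide
@[simp] lemma sigv15 : mysigma 15 = 24 := by decide
@[simp] lemma sigv16 : mysigma 16 = 31 := by decide
@[simp] lemma sigv17 : mysigma 17 = 18 := by decide
@[simp] lemma sigv18 : mysigma 18 = 39 := by decide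
@[simp] lemma sigv19 : mysigma 19 = 20 := by decide
@[simp] lemma sigv20 : mysigma 20 = 42 := by decide
@[simp] lemma sigv21 : mysigma 21 = 32 := by decide
@[simp] lemma sigv22 : mysigma 22 = 36 := by decide
@[simp] lemma sigv23 : mysigma 23 = 24 := by decide
@[simp] lemma sigv24 : mysigma 24 = 60 := by decide
@[simp] lemma sigv25 : mysigma 25 = 31 := by decide
@[simp] lemma sigv26 : mysigma 26 = 42 := by decide
@[simp] lemma sigv27 : mysigma 27 = 40 := by decide
@[simp] lemma sigv28 : mysigma 28 = 56 := by decide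
@[simp] lemma sigv29 : mysigma 29 = 30 := by decide
@[simp] lemma sigv30 : mysigma 30 = 72 := by decide
@[simp] lemma sigv31 : mysigma 31 = 32 := by decide
@[simp] lemma sigv32 : mysigma 32 = 63 := by decide
@[simp] lemma sigv33 : mysigma 33 = 48 := by decide
@[simp] lemma sigv34 : mysigma 34 = 54 := by decide
@[simp] lemma sigv35 : mysigma 35 = 48 := by decide
@[simp] lemma sigv36 : mysigma 36 = 91 := by decide
@[simp] lemma sigv37 : mysigma 37 = 38 := by decide
@[simp] lemma sigv38 : mysigma 38 = 60 := by decide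
@[simp] lemma sigv39 : mysigma 39 = 56 := by decide
@[simp] lemma sigv40 : mysigma 40 = 90 := by decide
@[simp] lemma sigv41 : mysigma 41 = 42 := by decide
@[simp] lemma sigv42 : mysigma 42 = 96 := by decide
@[simp] lemma sigv43 : mysigma 43 = 44 := by decide
@[simp] lemma sigv44 : mysigma 44 = 84 := by decide
@[simp] lemma sigv45 : mysigma 45 = 78 := by decide
@[simp] lemma sigv46 : mysigma 46 = 72 := by decide
@[simp] lemma sigv47 : mysigma 47 = 48 := by decide
@[simp] lemma sigv48 : mysigma 48 = 124 := by decide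
@[simp] lemma sigv49 : mysigma 49 = 57 := by decide
@[simp] lemma sigv50 : mysigma 50 = 93 := by decide
@[simp] lemma sigv51 : mysigma 51 = 72 := by decide
@[simp] lemma sigv52 : mysigma 52 = 98 := by decide
@[simp] lemma sigv53 : mysigma 53 = 54 := by decide
@[simp] lemma sigv54 : mysigma 54 = 120 := by decide
@[simp] lemma sigv55 : mysigma 55 = 72 := by decide
@[simp] lemma qv0 : q 0 = 1 := by simp [q, P]
@[simp] lemma qv1 : q 1 = 2 := by
  rw [show q 1 = q (0+1) from rfl, qstep]
  norm_num [Finset.sum_range_succ]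
@[simp] lemma qv2 : q 2 = 5 := by
  rw [show (2:ℕ) = 1+1 from rfl, qstep]
  norm_num [Finset.sum_range_succ]
@[simp] lemma qv3 : q 3 = 10 := by
  rw [show (3:ℕ) = 2+1 from rfl, qstep]
  norm_num [Finset.sum_range_succ]
@[simp] lemma qv4 : q 4 = 20 := by
  rw [show (4:ℕ) = 3+1 from rfl, qstep]
  norm_num [Finset.sum_range_succ]
@[simp] lemma qv5 : q 5 = 36 := by
  rw [show (5:ℕ) = 4+1 from rfl, qstep]
  norm_num [Finset.sum_range_succ]
@[simp] lemma qv6 : q 6 = 65 := by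
  rw [show (6:ℕ) = 5+1 from rfl, qstep]
  norm_num [Finset.sum_range_succ]
@[simp] lemma qv7 : q 7 = 110 := by
  rw [show (7:ℕ) = 6+1 from rfl, qstep]
  norm_num [Finset.sum_range_succ]
@[simp] lemma qv8 : q 8 = 185 := by
  rw [show (8:ℕ) = 7+1 from rfl, qstep]
  norm_num [Finset.sum_range_succ]
@[simp] lemma qv9 : q 9 = 300 := by
  rw [show (9:ℕ) = 8+1 from rfl, qstep]
  norm_num [Finset.sum_range_succ]
@[simp] lemma qv10 : q 10 = 481 := by
  rw [show (10:ℕ) = 9+1 from rfl, qstep]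
  norm_num [Finset.sum_range_succ]
@[simp] lemma qv11 : q 11 = 752 := by
  rw [show (11:ℕ) = 10+1 from rfl, qstep]
  norm_num [Finset.sum_range_succ]
@[simp] lemma qv12 : q 12 = 1165 := by
  rw [show (12:ℕ) = 11+1 from rfl, qstep]
  norm_num [Finset.sum_range_succ]
@[simp] lemma qv13 : q 13 = 1770 := by
  rw [show (13:ℕ) = 12+1 from rfl, qstep]
  norm_num [Finset.sum_range_succ]
@[simp] lemma qv14 : q 14 = 2665 := by
  rw [show (14:ℕ) = 13+1 from rfl, qstep]
  norm_num [Finset.sum_range_succ]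
@[simp] lemma qv15 : q 15 = 3956 := by
  rw [show (15:ℕ) = 14+1 from rfl, qstep]
  norm_num [Finset.sum_range_succ]
@[simp] lemma qv16 : q 16 = 5822 := by
  rw [show (16:ℕ) = 15+1 from rfl, qstep]
  norm_num [Finset.sum_range_succ]
@[simp] lemma qv17 : q 17 = 8470 := by
  rw [show (17:ℕ) = 16+1 from rfl, qstep]
  norm_num [Finset.sum_range_succ]
@[simp] lemma qv18 : q 18 = 12230 := by
  rw [show (18:ℕ) = 17+1 from rfl, qstep]
  norm_num [Finset.sum_range_succ]
@[simp] lemma qv19 : q 19 = 17490 := by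
  rw [show (19:ℕ) = 18+1 from rfl, qstep]
  norm_num [Finset.sum_range_succ]
@[simp] lemma qv20 : q 20 = 24842 := by
  rw [show (20:ℕ) = 19+1 from rfl, qstep]
  norm_num [Finset.sum_range_succ]
@[simp] lemma qv21 : q 21 = 35002 := by
  rw [show (21:ℕ) = 20+1 from rfl, qstep]
  norm_num [Finset.sum_range_succ]
@[simp] lemma qv22 : q 22 = 49010 := by
  rw [show (22:ℕ) = 21+1 from rfl, qstep]
  norm_num [Finset.sum_range_succ]
@[simp] lemma qv23 : q 23 = 68150 := by
  rw [show (23:ℕ) = 22+1 from rfl, qstep]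
  norm_num [Finset.sum_range_succ]
@[simp] lemma qv24 : q 24 = 94235 := by
  rw [show (24:ℕ) = 23+1 from rfl, qstep]
  norm_num [Finset.sum_range_succ]
@[simp] lemma qv25 : q 25 = 129512 := by
  rw [show (25:ℕ) = 24+1 from rfl, qstep]
  norm_num [Finset.sum_range_succ]
@[simp] lemma qv26 : q 26 = 177087 := by
  rw [show (26:ℕ) = 25+1 from rfl, qstep]
  norm_num [Finset.sum_range_succ]
@[simp] lemma qv27 : q 27 = 240840 := by
  rw [show (27:ℕ) = 26+1 from rfl, qstep]
  norm_num [Finset.sum_range_succ]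
@[simp] lemma qv28 : q 28 = 326015 := by
  rw [show (28:ℕ) = 27+1 from rfl, qstep]
  norm_num [Finset.sum_range_succ]
@[simp] lemma qv29 : q 29 = 439190 := by
  rw [show (29:ℕ) = 28+1 from rfl, qstep]
  norm_num [Finset.sum_range_succ]
@[simp] lemma qv30 : q 30 = 589128 := by
  rw [show (30:ℕ) = 29+1 from rfl, qstep]
  norm_num [Finset.sum_range_succ]
@[simp] lemma qv31 : q 31 = 786814 := by
  rw [show (31:ℕ) = 30+1 from rfl, qstep]
  norm_num [Finset.sum_range_succ]
@[simp] lemma qv32 : q 32 = 1046705 := by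
  rw [show (32:ℕ) = 31+1 from rfl, qstep]
  norm_num [Finset.sum_range_succ]
@[simp] lemma qv33 : q 33 = 1386930 := by
  rw [show (33:ℕ) = 32+1 from rfl, qstep]
  norm_num [Finset.sum_range_succ]
@[simp] lemma qv34 : q 34 = 1831065 := by
  rw [show (34:ℕ) = 33+1 from rfl, qstep]
  norm_num [Finset.sum_range_succ]
@[simp] lemma qv35 : q 35 = 2408658 := by
  rw [show (35:ℕ) = 34+1 from rfl, qstep]
  norm_num [Finset.sum_range_succ]
@[simp] lemma qv36 : q 36 = 3157789 := by
  rw [show (36:ℕ) = 35+1 from rfl, qstep]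
  norm_num [Finset.sum_range_succ]
@[simp] lemma qv37 : q 37 = 4126070 := by
  rw [show (37:ℕ) = 36+1 from rfl, qstep]
  norm_num [Finset.sum_range_succ]
@[simp] lemma qv38 : q 38 = 5374390 := by
  rw [show (38:ℕ) = 37+1 from rfl, qstep]
  norm_num [Finset.sum_range_succ]
@[simp] lemma qv39 : q 39 = 6978730 := by
  rw [show (39:ℕ) = 38+1 from rfl, qstep]
  norm_num [Finset.sum_range_succ]
@[simp] lemma qv40 : q 40 = 9035539 := by
  rw [show (40:ℕ) = 39+1 from rfl, qstep]
  norm_num [Finset.sum_range_succ]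
@[simp] lemma qv41 : q 41 = 11664896 := by
  rw [show (41:ℕ) = 40+1 from rfl, qstep]
  norm_num [Finset.sum_range_succ]
@[simp] lemma qv42 : q 42 = 15018300 := by
  rw [show (42:ℕ) = 41+1 from rfl, qstep]
  norm_num [Finset.sum_range_succ]
@[simp] lemma qv43 : q 43 = 19283830 := by
  rw [show (43:ℕ) = 42+1 from rfl, qstep]
  norm_num [Finset.sum_range_succ]
@[simp] lemma qv44 : q 44 = 24697480 := by
  rw [show (44:ℕ) = 43+1 from rfl, qstep]
  norm_num [Finset.sum_range_succ]
@[simp] lemma qv45 : q 45 = 31551450 := by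
  rw [show (45:ℕ) = 44+1 from rfl, qstep]
  norm_num [Finset.sum_range_succ]
@[simp] lemma qv46 : q 46 = 40210481 := by
  rw [show (46:ℕ) = 45+1 from rfl, qstep]
  norm_num [Finset.sum_range_succ]
@[simp] lemma qv47 : q 47 = 51124970 := by
  rw [show (47:ℕ) = 46+1 from rfl, qstep]
  norm_num [Finset.sum_range_succ]
@[simp] lemma qv48 : q 48 = 64854575 := by
  rw [show (48:ℕ) = 47+1 from rfl, qstep]
  norm_num [Finset.sum_range_succ]
@[simp] lemma qv49 : q 49 = 82088400 := by
  rw [show (49:ℕ) = 48+1 from rfl, qstep]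
  norm_num [Finset.sum_range_succ]
@[simp] lemma qv50 : q 50 = 103679156 := by
  rw [show (50:ℕ) = 49+1 from rfl, qstep]
  norm_num [Finset.sum_range_succ]
@[simp] lemma qv51 : q 51 = 130673928 := by
  rw [show (51:ℕ) = 50+1 from rfl, qstep]
  norm_num [Finset.sum_range_succ]
@[simp] lemma qv52 : q 52 = 164363280 := by
  rw [show (52:ℕ) = 51+1 from rfl, qstep]
  norm_num [Finset.sum_range_succ]
@[simp] lemma qv53 : q 53 = 206327710 := by
  rw [show (53:ℕ) = 52+1 from rfl, qstep]
  norm_num [Finset.sum_range_succ]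
@[simp] lemma qv54 : q 54 = 258508230 := by
  rw [show (54:ℕ) = 53+1 from rfl, qstep]
  norm_num [Finset.sum_range_succ]
@[simp] lemma qv55 : q 55 = 323275512 := by
  rw [show (55:ℕ) = 54+1 from rfl, qstep]
  norm_num [Finset.sum_range_succ]


def tb : List ℕ := [1, 2, 5, 10, 20, 36, 65, 110, 185, 300, 481, 752, 1165, 1770, 2665, 3956, 5822, 8470, 12230, 17490, 24842, 35002, 49010, 68150, 94235, 129512, 177087, 240840, 326015, 439190, 589128, 786814, 1046705, 1386930, 1831065, 2408658, 3157789, 4126070, 5374390, 6978730, 9035539, 11664896, 15018300, 19283830, 24697480, 31551450, 40210481, 51124970, 64854575, 82088400, 103679156, 130673928, 164363280, 206327710, 258508230, 323275512]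
def fv (n : ℕ) : ℕ := tb.getD n 0

def Ev : ℕ → ℕ
  | 0 => 20
  | 1 => 25
  | 2 => 16
  | 3 => 13
  | _+4 => 10

noncomputable def ec (v : ℕ) : ℝ := (Ev v : ℝ) / 20

lemma ec0 : ec 0 = 1 := by norm_num [ec, Ev]
lemma ec1 : ec 1 = 5/4 := by norm_num [ec, Ev]
lemma ec2 : ec 2 = 4/5 := by norm_num [ec, Ev]
lemma ec3 : ec 3 = 13/20 := by norm_num [ec, Ev]
lemma ec_ge4 (v : ℕ) (h : 4 ≤ v) : ec v = 1/2 := by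
  obtain ⟨w, rfl⟩ := Nat.exists_eq_add_of_le h
  rw [show 4 + w = w + 4 from by omega]
  norm_num [ec, Ev]
lemma ec_nonneg (v : ℕ) : 0 ≤ ec v := by unfold ec; positivity

lemma phi_base : ∀ u < 28, ∀ v ≤ u, 20 * fv (u+v) ≤ Ev v * fv u * fv v := by decide
lemma psi_base : ∀ u < 28, 4 ≤ u → 10 * fv (u+1) ≤ 19 * fv u := by decide
lemma g_base : ∀ m < 56, 28 ≤ m → 360 * m^2 ≤ fv m := by decide

lemma q_eq_f : ∀ n < 56, q n = (fv n : ℝ) := by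
  intro n h
  interval_cases n <;> norm_num [fv, tb]

lemma gauss (h : ℕ) : ∑ k ∈ Finset.range h, ((k:ℝ)+1) = h*(h+1)/2 := by
  induction h with
  | zero => simp
  | succ n ih => rw [Finset.sum_range_succ, ih]; push_cast; ring

lemma q_growth : ∀ m : ℕ, 28 ≤ m → 360 * (m:ℝ)^2 ≤ q m := by
  intro m
  induction m using Nat.strong_induction_on with
  | _ m IH =>
  intro hm
  rcases lt_or_ge m 56 with h56 | h56
  · have hb := g_base m h56 hm
    rw [q_eq_f m h56]
    exact_mod_cast hb
  · set h := m / 2 with hh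
    have hrec := q_rec m (by omega)
    set d := m - h with hd
    have hterm : ∀ k ∈ Finset.range h, ((k:ℝ)+1) * (360 * ((d:ℕ):ℝ)^2)
        ≤ (mysigma (k+1) : ℝ) * q (m-1-k) := by
      intro k hk
      simp only [Finset.mem_range] at hk
      have h1 : 28 ≤ m - 1 - k := by omega
      have h2 : m - 1 - k < m := by omega
      have hq := IH _ h2 h1
      have hdm : (d:ℝ) ≤ ((m-1-k : ℕ):ℝ) := by exact_mod_cast (by omega : d ≤ m-1-k)
      have hq2 : 360 * ((d:ℕ):ℝ)^2 ≤ q (m-1-k) := by nlinarith [Nat.cast_nonneg (α := ℝ) d]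
      have hs : ((k:ℝ)+1) ≤ (mysigma (k+1) : ℝ) := by exact_mod_cast mysigma_ge (k+1)
      have hqn := q_nonneg (m-1-k)
      nlinarith [Nat.cast_nonneg (α := ℝ) k]
    have hsum1 : ∑ k ∈ Finset.range h, ((k:ℝ)+1) * (360 * ((d:ℕ):ℝ)^2)
        ≤ ∑ k ∈ Finset.range h, (mysigma (k+1) : ℝ) * q (m-1-k) :=
      Finset.sum_le_sum hterm
    have hsub : ∑ k ∈ Finset.range h, (mysigma (k+1) : ℝ) * q (m-1-k)
        ≤ ∑ k ∈ Finset.range m, (mysigma (k+1) : ℝ) * q (m-1-k) := by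
      apply Finset.sum_le_sum_of_subset_of_nonneg
      · exact Finset.range_subset_range.mpr (by omega)
      · intro k _ _
        exact mul_nonneg (Nat.cast_nonneg _) (q_nonneg _)
    have hgauss : ∑ k ∈ Finset.range h, ((k:ℝ)+1) * (360 * ((d:ℕ):ℝ)^2)
        = (h:ℝ)*((h:ℝ)+1)/2 * (360 * ((d:ℕ):ℝ)^2) := by
      rw [← Finset.sum_mul, gauss]
    -- numeric facts
    have hm2d : (m:ℝ) ≤ 2*(d:ℝ) := by exact_mod_cast (by omega : m ≤ 2*d)
    have hdh : (d:ℝ) ≤ (h:ℝ)+1 := by exact_mod_cast (by omega : d ≤ h+1)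
    have hh8 : (8:ℝ) ≤ (h:ℝ) := by exact_mod_cast (by omega : 8 ≤ h)
    have hd0 : (0:ℝ) ≤ (d:ℝ) := Nat.cast_nonneg d
    have hm0 : (0:ℝ) < (m:ℝ) := by exact_mod_cast (by omega : 0 < m)
    have hfin : (m:ℝ) * (360 * (m:ℝ)^2) ≤ (m:ℝ) * q m := by
      rw [hrec]
      have e1 : (m:ℝ)^3 ≤ 8*(d:ℝ)^3 := by
        nlinarith [pow_le_pow_left₀ (le_of_lt hm0) hm2d 3]
      have e2 : 8*(d:ℝ) ≤ (h:ℝ)*((h:ℝ)+1) := by nlinarith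
      have e3 : (m:ℝ) * (360*(m:ℝ)^2) ≤ (h:ℝ)*((h:ℝ)+1)/2 * (2* (360 * ((d:ℕ):ℝ)^2)) := by
        nlinarith
      calc (m:ℝ) * (360 * (m:ℝ)^2)
          ≤ (h:ℝ)*((h:ℝ)+1)/2 * (2*(360 * ((d:ℕ):ℝ)^2)) := e3
        _ = 2 * ((h:ℝ)*((h:ℝ)+1)/2 * (360 * ((d:ℕ):ℝ)^2)) := by ring
        _ = 2 * (∑ k ∈ Finset.range h, ((k:ℝ)+1) * (360 * ((d:ℕ):ℝ)^2)) := by rw [hgauss]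
        _ ≤ 2 * (∑ k ∈ Finset.range m, (mysigma (k+1) : ℝ) * q (m-1-k)) := by linarith
    exact le_of_mul_le_mul_left hfin hm0

set_option maxHeartbeats 2000000 in
lemma main : ∀ n : ℕ,
    (∀ u v, u + v = n → v ≤ u → q (u+v) ≤ ec v * q u * q v) ∧
    (∀ u, u + 1 = n → 4 ≤ u → q (u+1) ≤ 19/10 * q u) := by
  intro n
  induction n using Nat.strong_induction_on with
  | _ n IH =>
  have hkey : ∀ x y, x + y < n → 4 ≤ x → q (x+y) ≤ ec y * q x * q y := by
    intro x y hlt hx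
    rcases le_or_gt y x with hyx | hxy
    · exact (IH _ hlt).1 x y rfl hyx
    · have h := (IH _ (by omega : y + x < n)).1 y x rfl (le_of_lt hxy)
      rw [add_comm y x] at h
      rw [show ec y = ec x from by rw [ec_ge4 x hx, ec_ge4 y (by omega)]]
      calc q (x+y) ≤ ec x * q y * q x := h
        _ = ec x * q x * q y := by ring
  have haux : ∀ j w, j ≤ 3 → 1 ≤ w → w + j < n → q (w+j) ≤ 25/2 * q w := by
    intro j w hj hw hlt
    have hqw := q_nonneg w
    rcases le_or_gt j w with hjw | hwj
    · have h := (IH _ hlt).1 w j rfl hjw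
      interval_cases j <;>
        simp only [ec0, ec1, ec2, ec3, qv0, qv1, qv2, qv3] at h <;> nlinarith [h]
    · have h := (IH _ (by omega : j + w < n)).1 j w rfl (le_of_lt hwj)
      rw [add_comm j w] at h
      have hwa : w ≤ 2 := by omega
      have hja : 1 ≤ j := by omega
      interval_cases w <;> interval_cases j <;>
        simp only [ec0, ec1, ec2, ec3, qv0, qv1, qv2, qv3] at h ⊢ <;> nlinarith [h]
  constructor
  · -- Phi
    intro u v huv hvu
    subst huv
    rcases Nat.eq_zero_or_pos v with rfl | hv
    · simp [ec0, qv0]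
    rcases lt_or_ge u 28 with hu | hu
    · -- base via table
      have hb := phi_base u hu v hvu
      rw [q_eq_f (u+v) (by omega), q_eq_f u (by omega), q_eq_f v (by omega)]
      have hcast : (20:ℝ) * (fv (u+v) : ℝ) ≤ (Ev v : ℝ) * (fv u : ℝ) * (fv v : ℝ) := by
        exact_mod_cast hb
      rw [ec]
      have h20 : (0:ℝ) < 20 := by norm_num
      nlinarith [hcast]
    · -- inductive case
      have hv1 : 1 ≤ v := hv
      have hrec := q_rec (u+v) (by omega)
      set c := u - 4 with hc
      have hsplit : ∑ k ∈ Finset.range (u+v), (mysigma (k+1):ℝ) * q (u+v-1-k)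
          = (∑ k ∈ Finset.Ico 0 c, (mysigma (k+1):ℝ) * q (u+v-1-k))
          + (∑ k ∈ Finset.Ico c u, (mysigma (k+1):ℝ) * q (u+v-1-k))
          + (∑ k ∈ Finset.Ico u (u+v), (mysigma (k+1):ℝ) * q (u+v-1-k)) := by
        rw [Finset.sum_Ico_consecutive _ (Nat.zero_le c) (by omega : c ≤ u),
            Finset.sum_Ico_consecutive _ (Nat.zero_le u) (by omega : u ≤ u+v),
            Finset.range_eq_Ico]
      have half_u : ∑ k ∈ Finset.range u, (mysigma (k+1):ℝ) * q (u-1-k) = (u:ℝ) * q u / 2 := by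
        have := q_rec u (by omega)
        linarith
      have hS1 : ∑ k ∈ Finset.Ico 0 c, (mysigma (k+1):ℝ) * q (u+v-1-k)
          ≤ ec v * q v * ((u:ℝ) * q u / 2) := by
        have hstep : ∀ k ∈ Finset.Ico 0 c, (mysigma (k+1):ℝ) * q (u+v-1-k)
            ≤ ec v * q v * ((mysigma (k+1):ℝ) * q (u-1-k)) := by
          intro k hk
          simp only [Finset.mem_Ico] at hk
          have hx : 4 ≤ u - 1 - k := by omega
          have hid : u + v - 1 - k = (u - 1 - k) + v := by omega
          have hb := hkey (u-1-k) v (by omega) hx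
          rw [hid]
          calc (mysigma (k+1):ℝ) * q ((u-1-k)+v)
              ≤ (mysigma (k+1):ℝ) * (ec v * q (u-1-k) * q v) :=
                mul_le_mul_of_nonneg_left hb (Nat.cast_nonneg _)
            _ = ec v * q v * ((mysigma (k+1):ℝ) * q (u-1-k)) := by ring
        calc ∑ k ∈ Finset.Ico 0 c, (mysigma (k+1):ℝ) * q (u+v-1-k)
            ≤ ∑ k ∈ Finset.Ico 0 c, ec v * q v * ((mysigma (k+1):ℝ) * q (u-1-k)) :=
              Finset.sum_le_sum hstep
          _ = ec v * q v * ∑ k ∈ Finset.Ico 0 c, (mysigma (k+1):ℝ) * q (u-1-k) := by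
              rw [Finset.mul_sum]
          _ ≤ ec v * q v * ∑ k ∈ Finset.range u, (mysigma (k+1):ℝ) * q (u-1-k) := by
              apply mul_le_mul_of_nonneg_left _ (mul_nonneg (ec_nonneg v) (q_nonneg v))
              apply Finset.sum_le_sum_of_subset_of_nonneg
              · intro k hk
                simp only [Finset.mem_Ico] at hk
                simp only [Finset.mem_range]
                omega
              · intro k _ _
                exact mul_nonneg (Nat.cast_nonneg _) (q_nonneg _)
          _ = ec v * q v * ((u:ℝ) * q u / 2) := by rw [half_u]
      have hS2 : ∑ k ∈ Finset.Ico c u, (mysigma (k+1):ℝ) * q (u+v-1-k)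
          ≤ 4 * (((u+v:ℕ):ℝ)^2 * (25/2 * q v)) := by
        have hterm : ∀ k ∈ Finset.Ico c u, (mysigma (k+1):ℝ) * q (u+v-1-k)
            ≤ ((u+v:ℕ):ℝ)^2 * (25/2 * q v) := by
          intro k hk
          simp only [Finset.mem_Ico] at hk
          have hid : u + v - 1 - k = v + (u-1-k) := by omega
          have hq := haux (u-1-k) v (by omega) hv (by omega)
          have hsig : (mysigma (k+1) : ℝ) ≤ ((u+v:ℕ):ℝ)^2 := by
            have h1 : mysigma (k+1) ≤ (k+1)^2 := mysigma_le _
            have h2 : (k+1)^2 ≤ (u+v)^2 := Nat.pow_le_pow_left (by omega) 2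
            exact_mod_cast le_trans h1 h2
          rw [hid]
          have hq0 : 0 ≤ q (v + (u-1-k)) := q_nonneg _
          calc (mysigma (k+1):ℝ) * q (v+(u-1-k))
              ≤ ((u+v:ℕ):ℝ)^2 * q (v+(u-1-k)) := mul_le_mul_of_nonneg_right hsig hq0
            _ ≤ ((u+v:ℕ):ℝ)^2 * (25/2 * q v) := by
                apply mul_le_mul_of_nonneg_left _ (by positivity)
                rw [add_comm v (u-1-k)] at hq ⊢
                exact hq
        have hcard := Finset.sum_le_card_nsmul _ _ _ hterm
        have : (Finset.Ico c u).card = 4 := by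
          rw [Nat.card_Ico]; omega
        rw [this] at hcard
        simpa using hcard
      have hS3 : ∑ k ∈ Finset.Ico u (u+v), (mysigma (k+1):ℝ) * q (u+v-1-k)
          ≤ ((u+v:ℕ):ℝ)^2 * ((v:ℝ) * q v / 2) := by
        have hterm : ∀ k ∈ Finset.Ico u (u+v), (mysigma (k+1):ℝ) * q (u+v-1-k)
            ≤ ((u+v:ℕ):ℝ)^2 * q (u+v-1-k) := by
          intro k hk
          simp only [Finset.mem_Ico] at hk
          have hsig : (mysigma (k+1) : ℝ) ≤ ((u+v:ℕ):ℝ)^2 := by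
            have h1 : mysigma (k+1) ≤ (k+1)^2 := mysigma_le _
            have h2 : (k+1)^2 ≤ (u+v)^2 := Nat.pow_le_pow_left (by omega) 2
            exact_mod_cast le_trans h1 h2
          exact mul_le_mul_of_nonneg_right hsig (q_nonneg _)
        calc ∑ k ∈ Finset.Ico u (u+v), (mysigma (k+1):ℝ) * q (u+v-1-k)
            ≤ ∑ k ∈ Finset.Ico u (u+v), ((u+v:ℕ):ℝ)^2 * q (u+v-1-k) :=
              Finset.sum_le_sum hterm
          _ = ((u+v:ℕ):ℝ)^2 * ∑ k ∈ Finset.Ico u (u+v), q (u+v-1-k) := by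
              rw [Finset.mul_sum]
          _ ≤ ((u+v:ℕ):ℝ)^2 * ((v:ℝ) * q v / 2) := by
              apply mul_le_mul_of_nonneg_left _ (by positivity)
              rw [Finset.sum_Ico_eq_sum_range]
              rw [show u + v - u = v from by omega]
              have hcg : ∀ i ∈ Finset.range v, q (u+v-1-(u+i)) = q (v-1-i) := by
                intro i hi
                simp only [Finset.mem_range] at hi
                congr 1
                omega
              rw [Finset.sum_congr rfl hcg, Finset.sum_range_reflect]
              have := q_partial v hv
              linarith
      -- combine
      have hqu := q_growth u hu
      have hqv := q_ge_two v hv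
      have hn2 : ((u+v:ℕ):ℝ) ≤ 2*(u:ℝ) := by
        push_cast
        have : (v:ℝ) ≤ (u:ℝ) := by exact_mod_cast hvu
        linarith
      have hqu90 : 90 * ((u+v:ℕ):ℝ)^2 ≤ q u := by
        have h0 : (0:ℝ) ≤ ((u+v:ℕ):ℝ) := Nat.cast_nonneg _
        nlinarith [hqu]
      have hev : (100:ℝ) + (v:ℝ) ≤ 90 * (v:ℝ) * ec v := by
        rcases lt_or_ge v 4 with h4 | h4
        · interval_cases v <;> norm_num [ec1, ec2, ec3]
        · rw [ec_ge4 v h4]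
          have : (4:ℝ) ≤ (v:ℝ) := by exact_mod_cast h4
          linarith
      have hnpos : (0:ℝ) < ((u+v:ℕ):ℝ) := by
        exact_mod_cast (by omega : 0 < u + v)
      have hfinal : ((u+v:ℕ):ℝ) * q (u+v) ≤ ((u+v:ℕ):ℝ) * (ec v * q u * q v) := by
        rw [hrec, hsplit]
        have hkey2 : ((100:ℝ) + (v:ℝ)) * ((u+v:ℕ):ℝ)^2 ≤ ec v * (v:ℝ) * q u := by
          have h1 : ((100:ℝ)+(v:ℝ)) * ((u+v:ℕ):ℝ)^2 ≤ 90*(v:ℝ)*ec v * ((u+v:ℕ):ℝ)^2 := by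
            nlinarith [sq_nonneg ((u+v:ℕ):ℝ)]
          have h2 : 90*(v:ℝ)*ec v * ((u+v:ℕ):ℝ)^2 ≤ ec v * (v:ℝ) * q u := by
            have hvpos : (0:ℝ) ≤ (v:ℝ) := Nat.cast_nonneg v
            nlinarith [ec_nonneg v, hqu90]
          linarith
        have hmul := mul_le_mul_of_nonneg_right hkey2 (q_nonneg v)
        push_cast at hS1 hS2 hS3 hmul ⊢
        linarith [hS1, hS2, hS3, hmul]
      exact le_of_mul_le_mul_left hfinal hnpos
  · -- Psi
    intro u hun hu4
    subst hun
    rcases lt_or_ge u 28 with hu | hu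
    · have hb := psi_base u hu hu4
      rw [q_eq_f (u+1) (by omega), q_eq_f u (by omega)]
      have hcast : (10:ℝ) * (fv (u+1) : ℝ) ≤ 19 * (fv u : ℝ) := by exact_mod_cast hb
      linarith
    · have hrec := q_rec (u+1) (by omega)
      set c := u - 4 with hc
      have hsplit : ∑ k ∈ Finset.range (u+1), (mysigma (k+1):ℝ) * q (u+1-1-k)
          = (∑ k ∈ Finset.Ico 0 c, (mysigma (k+1):ℝ) * q (u+1-1-k))
          + (∑ k ∈ Finset.Ico c (u+1), (mysigma (k+1):ℝ) * q (u+1-1-k)) := by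
        rw [Finset.sum_Ico_consecutive _ (Nat.zero_le c) (by omega : c ≤ u+1),
            Finset.range_eq_Ico]
      have half_u : ∑ k ∈ Finset.range u, (mysigma (k+1):ℝ) * q (u-1-k) = (u:ℝ) * q u / 2 := by
        have := q_rec u (by omega)
        linarith
      have hS1 : ∑ k ∈ Finset.Ico 0 c, (mysigma (k+1):ℝ) * q (u+1-1-k)
          ≤ 19/10 * ((u:ℝ) * q u / 2) := by
        have hstep : ∀ k ∈ Finset.Ico 0 c, (mysigma (k+1):ℝ) * q (u+1-1-k)
            ≤ 19/10 * ((mysigma (k+1):ℝ) * q (u-1-k)) := by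
          intro k hk
          simp only [Finset.mem_Ico] at hk
          have hid : u + 1 - 1 - k = (u-1-k) + 1 := by omega
          have hpsi := (IH ((u-1-k)+1) (by omega)).2 (u-1-k) rfl (by omega)
          rw [hid]
          calc (mysigma (k+1):ℝ) * q ((u-1-k)+1)
              ≤ (mysigma (k+1):ℝ) * (19/10 * q (u-1-k)) :=
                mul_le_mul_of_nonneg_left hpsi (Nat.cast_nonneg _)
            _ = 19/10 * ((mysigma (k+1):ℝ) * q (u-1-k)) := by ring
        calc ∑ k ∈ Finset.Ico 0 c, (mysigma (k+1):ℝ) * q (u+1-1-k)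
            ≤ ∑ k ∈ Finset.Ico 0 c, 19/10 * ((mysigma (k+1):ℝ) * q (u-1-k)) :=
              Finset.sum_le_sum hstep
          _ = 19/10 * ∑ k ∈ Finset.Ico 0 c, (mysigma (k+1):ℝ) * q (u-1-k) := by
              rw [Finset.mul_sum]
          _ ≤ 19/10 * ∑ k ∈ Finset.range u, (mysigma (k+1):ℝ) * q (u-1-k) := by
              apply mul_le_mul_of_nonneg_left _ (by norm_num)
              apply Finset.sum_le_sum_of_subset_of_nonneg
              · intro k hk
                simp only [Finset.mem_Ico] at hk
                simp only [Finset.mem_range]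
                omega
              · intro k _ _
                exact mul_nonneg (Nat.cast_nonneg _) (q_nonneg _)
          _ = 19/10 * ((u:ℝ) * q u / 2) := by rw [half_u]
      have hS2 : ∑ k ∈ Finset.Ico c (u+1), (mysigma (k+1):ℝ) * q (u+1-1-k)
          ≤ ((u+1:ℕ):ℝ)^2 * 38 := by
        have hterm : ∀ k ∈ Finset.Ico c (u+1), (mysigma (k+1):ℝ) * q (u+1-1-k)
            ≤ ((u+1:ℕ):ℝ)^2 * q (u+1-1-k) := by
          intro k hk
          simp only [Finset.mem_Ico] at hk
          have hsig : (mysigma (k+1) : ℝ) ≤ ((u+1:ℕ):ℝ)^2 := by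
            have h1 : mysigma (k+1) ≤ (k+1)^2 := mysigma_le _
            have h2 : (k+1)^2 ≤ (u+1)^2 := Nat.pow_le_pow_left (by omega) 2
            exact_mod_cast le_trans h1 h2
          exact mul_le_mul_of_nonneg_right hsig (q_nonneg _)
        calc ∑ k ∈ Finset.Ico c (u+1), (mysigma (k+1):ℝ) * q (u+1-1-k)
            ≤ ∑ k ∈ Finset.Ico c (u+1), ((u+1:ℕ):ℝ)^2 * q (u+1-1-k) :=
              Finset.sum_le_sum hterm
          _ = ((u+1:ℕ):ℝ)^2 * ∑ k ∈ Finset.Ico c (u+1), q (u+1-1-k) := by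
              rw [Finset.mul_sum]
          _ ≤ ((u+1:ℕ):ℝ)^2 * 38 := by
              apply mul_le_mul_of_nonneg_left _ (by positivity)
              rw [Finset.sum_Ico_eq_sum_range]
              rw [show u + 1 - c = 5 from by omega]
              have hcg : (∑ i ∈ Finset.range 5, q (u+1-1-(c+i)))
                  = q 4 + q 3 + q 2 + q 1 + q 0 := by
                rw [Finset.sum_range_succ, Finset.sum_range_succ, Finset.sum_range_succ,
                  Finset.sum_range_succ, Finset.sum_range_one]
                rw [show u+1-1-(c+0) = 4 from by omega, show u+1-1-(c+1) = 3 from by omega,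
                  show u+1-1-(c+2) = 2 from by omega, show u+1-1-(c+3) = 1 from by omega,
                  show u+1-1-(c+4) = 0 from by omega]
              rw [hcg, qv0, qv1, qv2, qv3, qv4]
              norm_num
      have hqu := q_growth u hu
      have hn2 : ((u+1:ℕ):ℝ) ≤ 2*(u:ℝ) := by
        push_cast
        have : (1:ℝ) ≤ (u:ℝ) := by exact_mod_cast (by omega : 1 ≤ u)
        linarith
      have hqu40 : 40 * ((u+1:ℕ):ℝ)^2 ≤ q u := by
        have h0 : (0:ℝ) ≤ ((u+1:ℕ):ℝ) := Nat.cast_nonneg _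
        nlinarith [hqu, hn2, h0]
      have hnpos : (0:ℝ) < ((u+1:ℕ):ℝ) := by
        exact_mod_cast (by omega : 0 < u + 1)
      have hfinal : ((u+1:ℕ):ℝ) * q (u+1) ≤ ((u+1:ℕ):ℝ) * (19/10 * q u) := by
        rw [hrec, hsplit]
        push_cast at hS1 hS2 hqu40 ⊢
        linarith [hS1, hS2, hqu40]
      exact le_of_mul_le_mul_left hfinal hnpos

theorem darcais_BO_two (a b : ℕ) (ha : 0 < a) (hb : 0 < b) (hab : 5 ≤ a + b) :
    P a 2 * P b 2 > P (a + b) 2 := by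
  have key : ∀ u v, 1 ≤ v → v ≤ u → 5 ≤ u + v → q (u+v) < q u * q v := by
    intro u v hv hvu hsum
    rcases lt_or_ge v 2 with hv2 | hv2
    · have hv1 : v = 1 := by omega
      subst hv1
      have hu4 : 4 ≤ u := by omega
      have h := (main (u+1)).2 u rfl hu4
      have hqu := q_ge_two u (by omega)
      rw [qv1]
      linarith
    · have h := (main (u+v)).1 u v rfl hvu
      have hec : ec v ≤ 4/5 := by
        rcases lt_or_ge v 4 with h4 | h4
        · interval_cases v <;> norm_num [ec2, ec3]
        · rw [ec_ge4 v h4]; norm_num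
      have hqu := q_ge_two u (by omega)
      have hqv := q_ge_two v (by omega)
      have hpos : (0:ℝ) < q u * q v := by nlinarith
      have h2 : ec v * q u * q v ≤ 4/5 * (q u * q v) := by
        have := mul_le_mul_of_nonneg_right hec (le_of_lt hpos)
        nlinarith [this]
      linarith
  show q (a+b) < q a * q b
  rcases le_total b a with h | h
  · exact key a b hb h hab
  · have := key b a ha h (by omega)
    rw [add_comm b a] at this
    linarith [this, mul_comm (q a) (q b)]
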